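/- Let A : [0,1]² → ℝ be C² with ∂²A/∂x∂y > 0, m ∈ ℝ, and V̄ a calibrated backward-subaction: V̄(x) = max_y [A(x,y) + V̄(y) − m]. On the set of x where the maximizer y(x) is unique, the map x ↦ y(x) is monotone nondecreasing. -/

import Mathlib

lemma deriv_eq_fderiv_apply (A : ℝ → ℝ → ℝ) (hA : ContDiff ℝ 2 (Function.uncurry A))
    (t y : ℝ) :
    deriv (fun x' => A x' y) t = (fderiv ℝ (Function.uncurry A) (t, y)) (1, 0) := by
  have hdiff : DifferentiableAt ℝ (Function.uncurry A) (t, y) :=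
    (hA.differentiable (by norm_num)).differentiableAt
  have h1 : HasDerivAt (fun x' : ℝ => (x', y)) ((1:ℝ), (0:ℝ)) t := by
    have := ((hasDerivAt_id t).prodMk (hasDerivAt_const t y))
    simpa using this
  have h2 : HasDerivAt (fun x' => A x' y) ((fderiv ℝ (Function.uncurry A) (t, y)) (1, 0)) t :=
    (by have h3 := hdiff.hasFDerivAt.comp_hasDerivAt t h1; exact h3)
  exact h2.deriv

lemma supermod (A : ℝ → ℝ → ℝ) (hA : ContDiff ℝ 2 (Function.uncurry A))
    (htwist : ∀ x ∈ Set.Icc (0:ℝ) 1, ∀ y ∈ Set.Icc (0:ℝ) 1,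
      0 < deriv (fun y' => deriv (fun x' => A x' y') x) y)
    {x x' z z' : ℝ} (hx : x ∈ Set.Icc (0:ℝ) 1) (hx' : x' ∈ Set.Icc (0:ℝ) 1)
    (hz : z ∈ Set.Icc (0:ℝ) 1) (hz' : z' ∈ Set.Icc (0:ℝ) 1)
    (hxx : x < x') (hzz : z' < z) :
    A x z + A x' z' < A x z' + A x' z := by
  -- f t y = ∂A/∂x (t,y)
  set f : ℝ → ℝ → ℝ := fun t y => deriv (fun x' => A x' y) t with hf
  have hAdiff : Differentiable ℝ (Function.uncurry A) := hA.differentiable (by norm_num)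
  have hfderivcont : Continuous (fderiv ℝ (Function.uncurry A)) :=
    hA.continuous_fderiv (by norm_num)
  -- for each t ∈ Icc 0 1, y ↦ f t y strictly mono on Icc 0 1
  have hmono : ∀ t ∈ Set.Icc (0:ℝ) 1, StrictMonoOn (f t) (Set.Icc 0 1) := by
    intro t ht
    apply strictMonoOn_of_deriv_pos (convex_Icc 0 1)
    · have : ContinuousOn (fun y => (fderiv ℝ (Function.uncurry A) (t, y)) (1, 0)) (Set.Icc 0 1) := by
        apply Continuous.continuousOn
        exact (isBoundedBilinearMap_apply.continuous.comp
          ((hfderivcont.comp (Continuous.prodMk_right t)).prodMk continuous_const))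
      refine this.congr ?_
      intro y _
      exact deriv_eq_fderiv_apply A hA t y
    · intro y hy
      rw [interior_Icc] at hy
      exact htwist t ht y (Set.mem_Icc_of_Ioo hy)
  -- g t = A t z - A t z' strictly mono on Icc x x'
  have hdiffAt : ∀ (t y : ℝ), DifferentiableAt ℝ (fun x' => A x' y) t := by
    intro t y
    have h1 : DifferentiableAt ℝ (fun x' : ℝ => (x', y)) t :=
      (differentiableAt_id.prodMk (differentiableAt_const y))
    exact (hAdiff.differentiableAt).comp t h1
  have hgmono : StrictMonoOn (fun t => A t z - A t z') (Set.Icc x x') := by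
    apply strictMonoOn_of_deriv_pos (convex_Icc x x')
    · exact ((hAdiff.continuous.comp (continuous_id.prodMk continuous_const)).sub
        (hAdiff.continuous.comp (continuous_id.prodMk continuous_const))).continuousOn
    · intro t ht
      rw [interior_Icc] at ht
      have htI : t ∈ Set.Icc (0:ℝ) 1 := ⟨le_trans hx.1 (le_of_lt ht.1), le_trans (le_of_lt ht.2) hx'.2⟩
      have : deriv (fun t => A t z - A t z') t = f t z - f t z' := by
        rw [deriv_fun_sub (hdiffAt t z) (hdiffAt t z')]
      rw [this]
      have := hmono t htI hz' hz hzz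
      linarith
  have h1 := hgmono (Set.left_mem_Icc.mpr (le_of_lt hxx)) (Set.right_mem_Icc.mpr (le_of_lt hxx)) hxx
  simp only at h1
  linarith

/-- under the twist condition ∂²A/∂x∂y > 0, the map x ↦ y(x) assigning
to x the (unique) maximizer in the calibration equation of a calibrated
backward-subaction V̄ is monotone nondecreasing. -/
theorem stmt16 (A : ℝ → ℝ → ℝ) (hA : ContDiff ℝ 2 (Function.uncurry A))
    (htwist : ∀ x ∈ Set.Icc (0:ℝ) 1, ∀ y ∈ Set.Icc (0:ℝ) 1,
      0 < deriv (fun y' => deriv (fun x' => A x' y') x) y)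
    (m : ℝ) (V : ℝ → ℝ) (hV : ContinuousOn V (Set.Icc 0 1))
    (hsub : ∀ x ∈ Set.Icc (0:ℝ) 1, ∀ y ∈ Set.Icc (0:ℝ) 1, V x ≥ A x y + V y - m)
    (D : Set ℝ) (hD : D ⊆ Set.Icc 0 1) (Y : ℝ → ℝ)
    (hY : ∀ x ∈ D, Y x ∈ Set.Icc (0:ℝ) 1 ∧ V x = A x (Y x) + V (Y x) - m)
    (huniq : ∀ x ∈ D, ∀ y ∈ Set.Icc (0:ℝ) 1, V x = A x y + V y - m → y = Y x) :
    ∀ x ∈ D, ∀ x' ∈ D, x ≤ x' → Y x ≤ Y x' := by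
  intro x hx x' hx' hxx
  by_contra hcon
  push_neg at hcon
  rcases eq_or_lt_of_le hxx with rfl | hlt
  · exact absurd rfl (ne_of_gt hcon)
  · obtain ⟨hYx, hcal⟩ := hY x hx
    obtain ⟨hYx', hcal'⟩ := hY x' hx'
    have h1 := hsub x (hD hx) (Y x') hYx'
    have h2 := hsub x' (hD hx') (Y x) hYx
    have key := supermod A hA htwist (hD hx) (hD hx') hYx hYx' hlt hcon
    linarith
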